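/- Let Q be a Hermitian n×n complex matrix with Q³ = Q, and let d₁, d₂, a, b be real numbers satisfying d₁ sin a − d₂ sin b = 1/2 and d₁ sin(2a) − d₂ sin(2b) = 1. For an n×n complex matrix B define C(t) := exp(itQ) B exp(−itQ). Then for every B: −i(BQ − QB) = d₁ (C(a) − C(−a)) − d₂ (C(b) − C(−b)). In particular the hypotheses hold for d₁ = 1, d₂ = (√2 − 1)/2, a = π/4, b = π/2. -/

import Mathlib

open Matrix Real


lemma pow_odd_tripotent {n : ℕ} (Q : Matrix (Fin n) (Fin n) ℂ) (hQ3 : Q ^ 3 = Q) (k : ℕ) :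
    Q ^ (2 * k + 1) = Q := by
  induction k with
  | zero => simp
  | succ k ih =>
    have h2 : 2 * (k + 1) + 1 = (2 * k + 1) + 2 := by ring
    rw [h2, pow_add, ih, ← pow_succ']
    exact hQ3

lemma pow_even_tripotent {n : ℕ} (Q : Matrix (Fin n) (Fin n) ℂ) (hQ3 : Q ^ 3 = Q) (k : ℕ) :
    Q ^ (2 * (k + 1)) = Q ^ 2 := by
  have h2 : 2 * (k + 1) = (2 * k + 1) + 1 := by ring
  rw [h2, pow_succ, pow_odd_tripotent Q hQ3, sq]

lemma expQ {n : ℕ} (Q : Matrix (Fin n) (Fin n) ℂ) (hQ3 : Q ^ 3 = Q) (t : ℝ) :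
    NormedSpace.exp ((Complex.I * (t : ℂ)) • Q) =
      1 + (Complex.I * Complex.sin t) • Q + (Complex.cos t - 1) • Q ^ 2 := by
  letI : SeminormedRing (Matrix (Fin n) (Fin n) ℂ) := Matrix.linftyOpSemiNormedRing
  letI : NormedRing (Matrix (Fin n) (Fin n) ℂ) := Matrix.linftyOpNormedRing
  letI : NormedAlgebra ℂ (Matrix (Fin n) (Fin n) ℂ) := Matrix.linftyOpNormedAlgebra
  set c : ℂ := Complex.I * (t : ℂ) with hc
  have hexp := NormedSpace.exp_series_hasSum_exp' (𝕂 := ℂ) (c • Q)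
  have key : HasSum (fun m : ℕ => ((Nat.factorial m : ℂ)⁻¹ : ℂ) • (c • Q) ^ m)
      ((Complex.cos t • Q ^ 2 + (1 - Q ^ 2)) + (Complex.I * Complex.sin t) • Q) := by
    refine HasSum.even_add_odd ?_ ?_
    · have hg : HasSum (fun k : ℕ => ((-1 : ℂ) ^ k * (t : ℂ) ^ (2 * k) / (Nat.factorial (2 * k) : ℂ)) • Q ^ 2)
          (Complex.cos t • Q ^ 2) := (Complex.hasSum_cos (t : ℂ)).smul_const _
      have hh : HasSum (fun k : ℕ => if k = 0 then ((1 : Matrix (Fin n) (Fin n) ℂ) - Q ^ 2) else 0)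
          (1 - Q ^ 2) := hasSum_ite_eq 0 _
      refine (hg.add hh).congr_fun fun k => ?_
      rcases k with _ | k
      · simp
      · have hck : c ^ (2 * (k + 1)) = (-1 : ℂ) ^ (k + 1) * (t : ℂ) ^ (2 * (k + 1)) := by
          rw [hc, mul_pow, pow_mul, Complex.I_sq]
        simp only [Nat.succ_ne_zero, if_false, add_zero, smul_pow,
          pow_even_tripotent Q hQ3 k, smul_smul, hck]
        congr 1
        field_simp
    · have hs : HasSum (fun k : ℕ =>
            (Complex.I * ((-1 : ℂ) ^ k * (t : ℂ) ^ (2 * k + 1) / (Nat.factorial (2 * k + 1) : ℂ))) • Q)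
          ((Complex.I * Complex.sin t) • Q) :=
        ((Complex.hasSum_sin (t : ℂ)).mul_left Complex.I).smul_const _
      refine hs.congr_fun fun k => ?_
      have hck : c ^ (2 * k + 1) = Complex.I * ((-1 : ℂ) ^ k * (t : ℂ) ^ (2 * k + 1)) := by
        rw [hc, mul_pow, pow_succ, pow_mul, Complex.I_sq]
        ring
      simp only [smul_pow, pow_odd_tripotent Q hQ3 k, smul_smul, hck]
      congr 1
      field_simp
  have := hexp.unique key
  refine this.trans ?_
  rw [sub_smul, one_smul]
  abel

lemma conj_diff {n : ℕ} (Q B : Matrix (Fin n) (Fin n) ℂ) (s c : ℂ) :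
    (1 + s • Q + c • Q ^ 2) * B * (1 + (-s) • Q + c • Q ^ 2)
      - (1 + (-s) • Q + c • Q ^ 2) * B * (1 + s • Q + c • Q ^ 2)
    = (2 * s) • (Q * B - B * Q) + (2 * (s * c)) • (Q * B * Q ^ 2 - Q ^ 2 * B * Q) := by
  simp only [mul_add, add_mul, mul_sub, sub_mul, smul_mul_assoc, mul_smul_comm, smul_smul,
    one_mul, mul_one, smul_sub, smul_add, neg_smul, neg_mul, mul_neg]
  module

/-- Commutator-extraction identity behind the four-term parameter-shift rule for
tripotent Hermitian generators (`Q³ = Q`): if the real coefficients satisfy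
`d₁ sin a − d₂ sin b = 1/2` and `d₁ sin 2a − d₂ sin 2b = 1`, then for every `B`,
`−i[B,Q] = d₁ (C(a) − C(−a)) − d₂ (C(b) − C(−b))` where
`C(t) = e^{itQ} B e^{−itQ}`. In particular the hypotheses hold for
`d₁ = 1`, `d₂ = (√2 − 1)/2`, `a = π/4`, `b = π/2`. -/
theorem parameter_shift_commutator_extraction {n : ℕ}
    (Q : Matrix (Fin n) (Fin n) ℂ) (hQherm : Qᴴ = Q) (hQ3 : Q ^ 3 = Q)
    (d₁ d₂ a b : ℝ)
    (h1 : d₁ * Real.sin a - d₂ * Real.sin b = 1 / 2)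
    (h2 : d₁ * Real.sin (2 * a) - d₂ * Real.sin (2 * b) = 1)
    (C : Matrix (Fin n) (Fin n) ℂ → ℝ → Matrix (Fin n) (Fin n) ℂ)
    (hC : ∀ B t, C B t = NormedSpace.exp ((Complex.I * (t : ℂ)) • Q) * B *
        NormedSpace.exp ((-(Complex.I * (t : ℂ))) • Q)) :
    (∀ B : Matrix (Fin n) (Fin n) ℂ,
        (-Complex.I) • (B * Q - Q * B) =
          (d₁ : ℂ) • (C B a - C B (-a)) - (d₂ : ℂ) • (C B b - C B (-b))) ∧
      ((1 : ℝ) * Real.sin (π / 4) - (Real.sqrt 2 - 1) / 2 * Real.sin (π / 2) = 1 / 2 ∧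
        (1 : ℝ) * Real.sin (2 * (π / 4)) - (Real.sqrt 2 - 1) / 2 * Real.sin (2 * (π / 2)) = 1) := by
  have expQ' : ∀ t : ℝ, NormedSpace.exp ((-(Complex.I * (t : ℂ))) • Q) =
      1 + (-(Complex.I * Complex.sin t)) • Q + (Complex.cos t - 1) • Q ^ 2 := by
    intro t
    have h := expQ Q hQ3 (-t)
    simp only [Complex.ofReal_neg, mul_neg, Complex.sin_neg, Complex.cos_neg, neg_neg] at h
    exact h
  have hdiff : ∀ (B : Matrix (Fin n) (Fin n) ℂ) (t : ℝ),
      C B t - C B (-t) =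
        (2 * (Complex.I * Complex.sin t)) • (Q * B - B * Q) +
          (2 * ((Complex.I * Complex.sin t) * (Complex.cos t - 1))) •
            (Q * B * Q ^ 2 - Q ^ 2 * B * Q) := by
    intro B t
    rw [hC, hC]
    simp only [Complex.ofReal_neg, mul_neg, neg_neg]
    rw [expQ Q hQ3 t, expQ' t]
    exact conj_diff Q B _ _
  have h1c : (d₁ : ℂ) * Complex.sin a - (d₂ : ℂ) * Complex.sin b = 1 / 2 := by
    have := congrArg (fun x : ℝ => (x : ℂ)) h1
    push_cast at this
    exact this
  have h2c : (d₁ : ℂ) * Complex.sin (2 * a) - (d₂ : ℂ) * Complex.sin (2 * b) = 1 := by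
    have := congrArg (fun x : ℝ => (x : ℂ)) h2
    push_cast at this
    exact this
  rw [Complex.sin_two_mul, Complex.sin_two_mul] at h2c
  refine ⟨fun B => ?_, ?_, ?_⟩
  · rw [hdiff B a, hdiff B b]
    match_scalars
    · linear_combination 2 * Complex.I * h1c
    · linear_combination -2 * Complex.I * h1c
    · linear_combination 2 * Complex.I * h1c - Complex.I * h2c
    · linear_combination Complex.I * h2c - 2 * Complex.I * h1c
  · rw [Real.sin_pi_div_four, Real.sin_pi_div_two]
    ring
  · have e1 : 2 * (π / 4) = π / 2 := by ring
    have e2 : 2 * (π / 2) = π := by ring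
    rw [e1, e2, Real.sin_pi_div_two, Real.sin_pi]
    ring
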